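/- The function s ↦ (s²/(s²−1))^{s/2}, defined for real s > 1, is strictly decreasing in s. -/

import Mathlib

open Real Set

lemma aux_hasDeriv (s : ℝ) (hs : 1 < s) :
    HasDerivAt (fun t : ℝ => t / 2 * (Real.log (t ^ 2) - Real.log (t ^ 2 - 1)))
      (1 / 2 * (Real.log (s ^ 2) - Real.log (s ^ 2 - 1)) +
        s / 2 * (2 * s / s ^ 2 - 2 * s / (s ^ 2 - 1))) s := by
  have hs0 : s ≠ 0 := by nlinarith
  have h1 : s ^ 2 - 1 ≠ 0 := by nlinarith
  have hsq : HasDerivAt (fun t : ℝ => t ^ 2) (2 * s) s := by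
    simpa using (hasDerivAt_pow 2 s)
  have hsq1 : HasDerivAt (fun t : ℝ => t ^ 2 - 1) (2 * s) s := hsq.sub_const 1
  have hl1 : HasDerivAt (fun t : ℝ => Real.log (t ^ 2)) (2 * s / s ^ 2) s :=
    hsq.log (pow_ne_zero 2 hs0)
  have hl2 : HasDerivAt (fun t : ℝ => Real.log (t ^ 2 - 1)) (2 * s / (s ^ 2 - 1)) s :=
    hsq1.log h1
  have hid : HasDerivAt (fun t : ℝ => t / 2) (1 / 2) s := by
    simpa using (hasDerivAt_id s).div_const 2
  exact hid.mul (hl1.sub hl2)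

lemma aux_anti :
    StrictAntiOn (fun t : ℝ => t / 2 * (Real.log (t ^ 2) - Real.log (t ^ 2 - 1)))
      (Set.Ioi (1 : ℝ)) := by
  apply strictAntiOn_of_deriv_neg (convex_Ioi 1)
  · exact fun x hx => ((aux_hasDeriv x hx).continuousAt).continuousWithinAt
  · intro x hx
    rw [interior_Ioi] at hx
    have hx1 : (1 : ℝ) < x := hx
    rw [(aux_hasDeriv x hx).deriv]
    have hx0 : x ≠ 0 := by nlinarith
    have hpos : (0 : ℝ) < x ^ 2 - 1 := by nlinarith
    have hxx : (1 : ℝ) < x ^ 2 / (x ^ 2 - 1) := by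
      rw [lt_div_iff₀ hpos]; nlinarith
    have hlog : Real.log (x ^ 2 / (x ^ 2 - 1)) < x ^ 2 / (x ^ 2 - 1) - 1 :=
      Real.log_lt_sub_one_of_pos (by positivity) (ne_of_gt hxx)
    have hdiv : Real.log (x ^ 2) - Real.log (x ^ 2 - 1) = Real.log (x ^ 2 / (x ^ 2 - 1)) :=
      (Real.log_div (pow_ne_zero 2 hx0) (ne_of_gt hpos)).symm
    rw [hdiv]
    have h2 : x ^ 2 / (x ^ 2 - 1) - 1 = 1 / (x ^ 2 - 1) := by
      field_simp
      ring
    rw [h2] at hlog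
    have h3 : x / 2 * (2 * x / x ^ 2 - 2 * x / (x ^ 2 - 1)) = -(1 / (x ^ 2 - 1)) := by
      field_simp
      ring
    rw [h3]
    have h4 : (0 : ℝ) < 1 / (x ^ 2 - 1) := by positivity
    linarith

theorem stmt13 :
    StrictAntiOn (fun s : ℝ => (s ^ 2 / (s ^ 2 - 1)) ^ (s / 2)) (Set.Ioi (1 : ℝ)) := by
  intro x hx y hy hxy
  have hkey := aux_anti hx hy hxy
  have heq : ∀ t : ℝ, t ∈ Set.Ioi (1 : ℝ) →
      (t ^ 2 / (t ^ 2 - 1)) ^ (t / 2) =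
        Real.exp (t / 2 * (Real.log (t ^ 2) - Real.log (t ^ 2 - 1))) := by
    intro t ht
    have ht1 : (1 : ℝ) < t := ht
    have ht0 : t ≠ 0 := by nlinarith
    have hpos : (0 : ℝ) < t ^ 2 - 1 := by nlinarith
    have hb : (0 : ℝ) < t ^ 2 / (t ^ 2 - 1) := by positivity
    rw [Real.rpow_def_of_pos hb, Real.log_div (pow_ne_zero 2 ht0) (ne_of_gt hpos)]
    ring_nf
  simp only [heq x hx, heq y hy]
  exact Real.exp_lt_exp.mpr hkey
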